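/- With τζ = −conj(ζ) on the Jacobian J = ℂ^g/Λ, Λ = 2πi ℤ^g + B ℤ^g, conj(B) = B − 2πi H, the set S₂ = {ζ ∈ J : ζ − τζ = πi diag(H)} is the disjoint union over v ∈ (ℤ/2ℤ)^{g−r} of the tori T̃_v = { 2πi(α₁ e₁ + … + α_g e_g) + (v₁/2) B_{r+1} + … + (v_{g−r}/2) B_g : α_j ∈ ℝ/ℤ }, where r = rank H; i.e., every ζ ∈ S₂ lies in exactly one T̃_v. -/

import Mathlib

open scoped BigOperators

/-- with `τζ = −conj(ζ)` on the Jacobian `ℂ^g/(2πi ℤ^g + B ℤ^g)` and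
`conj(B) = B − 2πi H`, with `H` in the dividing normal form (`k` antidiagonal 2×2
blocks `[[0,1],[1,0]]` followed by zeros, so `r = rank H = 2k`), the set
`S₂ = {ζ : ζ − τζ = πi diag(H)}` is the disjoint union over `v ∈ (ℤ/2ℤ)^{g−r}` of
the tori `T̃_v = { 2πi α + (1/2) Σ_{j>r} v_j B_j : α ∈ (ℝ/ℤ)^g }`: every point of
`S₂` lies in exactly one torus `T̃_v`. -/
theorem S2_disjoint_union_of_tori (g k : ℕ) (hg : 1 ≤ g) (hk : 2 * k ≤ g)
    (B : Matrix (Fin g) (Fin g) ℂ)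
    (hsym : ∀ i j, B i j = B j i)
    (hneg : ∀ x : Fin g → ℝ, x ≠ 0 → ∑ i, ∑ j, (B i j).re * x i * x j < 0)
    (H : Matrix (Fin g) (Fin g) ℤ)
    (hH : ∀ i j, H i j
        = if (i : ℕ) / 2 = (j : ℕ) / 2 ∧ (i : ℕ) < 2 * k ∧ i ≠ j then 1 else 0)
    (hBH : ∀ i j, (starRingEnd ℂ) (B i j)
        = B i j - 2 * (Real.pi : ℂ) * Complex.I * (H i j : ℂ))
    (z : Fin g → ℂ)
    (hz : ∃ N M : Fin g → ℤ, ∀ i,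
      z i - (-(starRingEnd ℂ) (z i))
        = (Real.pi : ℂ) * Complex.I * (H i i : ℂ)
          + (2 * (Real.pi : ℂ) * Complex.I * (N i : ℂ) + ∑ j, B i j * (M j : ℂ))) :
    ∃! v : Fin g → ℤ,
      (∀ i : Fin g, (v i = 0 ∨ v i = 1) ∧ ((i : ℕ) < 2 * k → v i = 0)) ∧
      ∃ (α : Fin g → ℝ) (N M : Fin g → ℤ), ∀ i,
        z i = 2 * (Real.pi : ℂ) * Complex.I * (α i : ℂ)
          + (∑ j, ((v j : ℂ) / 2) * B i j)
          + (2 * (Real.pi : ℂ) * Complex.I * (N i : ℂ) + ∑ j, B i j * (M j : ℂ)) := by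
  obtain ⟨N, M, hz⟩ := hz
  have hπ : (Real.pi : ℝ) ≠ 0 := Real.pi_ne_zero
  have hHdiag : ∀ i, H i i = 0 := by intro i; rw [hH]; simp
  -- real and imaginary parts of sums
  have sum_re : ∀ (i : Fin g) (m : Fin g → ℤ),
      (∑ j, B i j * (m j : ℂ)).re = ∑ j, (B i j).re * (m j : ℝ) := by
    intro i m
    rw [Complex.re_sum]
    exact Finset.sum_congr rfl fun j _ => by simp [Complex.mul_re]
  have sum_im : ∀ (i : Fin g) (m : Fin g → ℤ),
      (∑ j, B i j * (m j : ℂ)).im = ∑ j, (B i j).im * (m j : ℝ) := by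
    intro i m
    rw [Complex.im_sum]
    exact Finset.sum_congr rfl fun j _ => by simp [Complex.mul_im]
  -- imaginary part of B
  have hImB : ∀ i j, (B i j).im = Real.pi * (H i j : ℝ) := by
    intro i j
    have h := congrArg Complex.im (hBH i j)
    simp [Complex.mul_im, Complex.mul_re] at h
    linarith
  -- real part of the membership equation
  have hre : ∀ i, 2 * (z i).re = ∑ j, (B i j).re * (M j : ℝ) := by
    intro i
    have h := congrArg Complex.re (hz i)
    rw [hHdiag i] at h
    simp [sum_re, Complex.mul_re, Complex.mul_im] at h
    linarith
  -- imaginary part of the membership equation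
  have him : ∀ i, ∑ j, (H i j : ℤ) * M j = -2 * N i := by
    intro i
    have h := congrArg Complex.im (hz i)
    rw [hHdiag i] at h
    simp [sum_im, Complex.mul_im, Complex.mul_re, hImB] at h
    have hs : ∑ x, Real.pi * (H i x : ℝ) * (M x : ℝ)
        = Real.pi * ∑ j, (H i j : ℝ) * (M j : ℝ) := by
      rw [Finset.mul_sum]
      exact Finset.sum_congr rfl fun j _ => by ring
    rw [hs] at h
    have h2 : Real.pi * (2 * (N i : ℝ) + ∑ j, (H i j : ℝ) * (M j : ℝ)) = 0 := by
      linear_combination -h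
    have h3 : (2 * (N i : ℝ) + ∑ j, (H i j : ℝ) * (M j : ℝ)) = 0 :=
      (mul_eq_zero.1 h2).resolve_left hπ
    have h4 : ((∑ j, H i j * M j : ℤ) : ℝ) = ((-2 * N i : ℤ) : ℝ) := by
      push_cast
      linarith
    exact_mod_cast h4
  -- M j is even for j < 2k
  have hMeven : ∀ j : Fin g, (j : ℕ) < 2 * k → 2 ∣ M j := by
    intro j hj
    have hi' : (if (j : ℕ) % 2 = 0 then (j : ℕ) + 1 else (j : ℕ) - 1) < g := by
      split <;> omega
    set i : Fin g := ⟨if (j : ℕ) % 2 = 0 then (j : ℕ) + 1 else (j : ℕ) - 1, hi'⟩ with hidef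
    have hival : (i : ℕ) = if (j : ℕ) % 2 = 0 then (j : ℕ) + 1 else (j : ℕ) - 1 := rfl
    have hsum : ∑ l, (H i l : ℤ) * M l = M j := by
      rw [Finset.sum_eq_single j]
      · rw [hH]
        rw [if_pos]
        · ring
        · refine ⟨by rw [hival]; split <;> omega, by rw [hival]; split <;> omega, ?_⟩
          intro he
          have : (i : ℕ) = (j : ℕ) := congrArg Fin.val he
          rw [hival] at this; revert this; split <;> omega
      · intro l _ hlj
        rw [hH]
        rw [if_neg]
        · ring
        · rintro ⟨h1, h2, h3⟩
          apply hlj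
          apply Fin.ext
          have hij : (i : ℕ) ≠ (l : ℕ) := fun he => h3 (Fin.ext he)
          rw [hival] at h1 h2 hij
          revert h1 h2 hij; split <;> omega
      · intro hj'; exact absurd (Finset.mem_univ j) hj'
    have := him i
    rw [hsum] at this
    exact ⟨-N i, by omega⟩
  -- the candidate v
  set v : Fin g → ℤ := fun j => if (j : ℕ) < 2 * k then 0 else M j % 2 with hvdef
  have hvM : ∀ j, v j + 2 * ((M j - v j) / 2) = M j := by
    intro j
    by_cases hj : (j : ℕ) < 2 * k
    · have h2 := hMeven j hj
      simp only [hvdef, if_pos hj]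
      omega
    · simp only [hvdef, if_neg hj]
      omega
  have hπC : (Real.pi : ℂ) ≠ 0 := by exact_mod_cast hπ
  -- real part from any representation
  have rep_re : ∀ (i : Fin g) (w : Fin g → ℤ) (a : ℝ) (n : ℤ) (m : Fin g → ℤ),
      z i = 2 * (Real.pi : ℂ) * Complex.I * (a : ℂ)
          + (∑ j, ((w j : ℂ) / 2) * B i j)
          + (2 * (Real.pi : ℂ) * Complex.I * (n : ℂ) + ∑ j, B i j * (m j : ℂ)) →
      (z i).re = ∑ j, (B i j).re * ((w j : ℝ) / 2 + (m j : ℝ)) := by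
    intro i w a n m h
    have h1 := congrArg Complex.re h
    have hw : ∀ j, ((w j : ℂ) / 2) * B i j = (((w j : ℝ) / 2 : ℝ) : ℂ) * B i j := by
      intro j; push_cast; ring
    rw [Finset.sum_congr rfl fun j _ => hw j] at h1
    have h2 : (∑ j, (((w j : ℝ) / 2 : ℝ) : ℂ) * B i j).re
        = ∑ j, ((w j : ℝ) / 2) * (B i j).re := by
      rw [Complex.re_sum]
      exact Finset.sum_congr rfl fun j _ => Complex.re_ofReal_mul _ _
    rw [Complex.add_re, Complex.add_re, h2, Complex.add_re, sum_re] at h1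
    simp [Complex.mul_re, Complex.mul_im] at h1
    rw [h1, ← Finset.sum_add_distrib]
    exact Finset.sum_congr rfl fun j _ => by ring
  -- injectivity of Re B
  have hinj : ∀ x y : Fin g → ℝ,
      (∀ i, ∑ j, (B i j).re * x j = ∑ j, (B i j).re * y j) → x = y := by
    intro x y hxy
    by_contra hne
    have hd : (fun j => x j - y j) ≠ 0 := by
      intro h0
      apply hne
      funext j
      have := congrFun h0 j
      simpa [sub_eq_zero] using this
    have hlt := hneg _ hd
    have hzero : ∑ i, ∑ j, (B i j).re * ((fun j => x j - y j) i) * ((fun j => x j - y j) j) = 0 := by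
      have inner : ∀ i : Fin g, ∑ j, (B i j).re * (x j - y j) = 0 := by
        intro i
        have := hxy i
        simp only [mul_sub]
        rw [Finset.sum_sub_distrib, this, sub_self]
      calc ∑ i, ∑ j, (B i j).re * (x i - y i) * (x j - y j)
          = ∑ i : Fin g, (x i - y i) * ∑ j, (B i j).re * (x j - y j) := by
            refine Finset.sum_congr rfl fun i _ => ?_
            rw [Finset.mul_sum]
            exact Finset.sum_congr rfl fun j _ => by ring
        _ = 0 := by
            refine Finset.sum_eq_zero fun i _ => ?_
            rw [inner i, mul_zero]
    rw [hzero] at hlt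
    exact lt_irrefl 0 hlt
  refine ⟨v, ⟨?_, ?_⟩, ?_⟩
  · -- v takes values 0/1, zero below 2k
    intro i
    constructor
    · by_cases hi : (i : ℕ) < 2 * k
      · left; simp [hvdef, hi]
      · simp only [hvdef, if_neg hi]; omega
    · intro hi; simp [hvdef, hi]
  · -- existence of the representation
    refine ⟨fun i => (z i).im / (2 * Real.pi) + (N i : ℝ) / 2, 0, fun j => (M j - v j) / 2, ?_⟩
    intro i
    have hα : 2 * (Real.pi : ℂ) * Complex.I * (((z i).im / (2 * Real.pi) + (N i : ℝ) / 2 : ℝ) : ℂ)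
        = Complex.I * ((z i).im : ℂ) + (Real.pi : ℂ) * Complex.I * (N i : ℂ) := by
      push_cast
      field_simp
    have hsum2 : (∑ j, ((v j : ℂ) / 2) * B i j) + ∑ j, B i j * (((M j - v j) / 2 : ℤ) : ℂ)
        = (∑ j, B i j * (M j : ℂ)) / 2 := by
      rw [Finset.sum_div, ← Finset.sum_add_distrib]
      refine Finset.sum_congr rfl fun j _ => ?_
      have hc : ((v j : ℂ)) + 2 * (((M j - v j) / 2 : ℤ) : ℂ) = (M j : ℂ) := by
        exact_mod_cast congrArg (Int.cast : ℤ → ℂ) (hvM j)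
      linear_combination (B i j / 2) * hc
    have h1 : z i + (starRingEnd ℂ) (z i)
        = 2 * (Real.pi : ℂ) * Complex.I * (N i : ℂ) + ∑ j, B i j * (M j : ℂ) := by
      have := hz i
      rw [hHdiag i] at this
      simpa using this
    have hsc := Complex.sub_conj (z i)
    push_cast at hsc
    simp only [Pi.zero_apply, Int.cast_zero, mul_zero, zero_add]
    linear_combination -hα - hsum2 + h1 / 2 + hsc / 2
  · -- uniqueness
    rintro v' ⟨hv'prop, α', N', M', h'⟩
    have hre2 : ∀ i, (z i).re = ∑ j, (B i j).re * ((v' j : ℝ) / 2 + (M' j : ℝ)) := by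
      intro i; exact rep_re i v' (α' i) (N' i) M' (h' i)
    have hre1 : ∀ i, (z i).re = ∑ j, (B i j).re * ((M j : ℝ) / 2) := by
      intro i
      have := hre i
      rw [Finset.sum_congr rfl fun j (_ : j ∈ Finset.univ) =>
        (by ring : (B i j).re * ((M j : ℝ) / 2) = ((B i j).re * (M j : ℝ)) / 2)]
      rw [← Finset.sum_div]
      linarith
    have heq : (fun j => (v' j : ℝ) / 2 + (M' j : ℝ)) = fun j => (M j : ℝ) / 2 := by
      apply hinj
      intro i
      rw [← hre2 i, hre1 i]
    funext j
    have hj := congrFun heq j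
    have hjz : (v' j : ℝ) = ((M j - 2 * M' j : ℤ) : ℝ) := by push_cast; linarith
    have hjz2 : v' j = M j - 2 * M' j := by exact_mod_cast hjz
    have hv01 := (hv'prop j).1
    by_cases hlt : (j : ℕ) < 2 * k
    · rw [(hv'prop j).2 hlt]
      simp [hvdef, hlt]
    · simp only [hvdef, if_neg hlt]
      omega
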